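/- Fix a nonzero k > −1/4. The maximum of the function G(z,θ) = −cos(θ)(2z + cos θ)/z² subject to the constraint z(cos θ + z) = k with z > 0 is 4√(1+4k)/(1+√(1+4k))², and the minimum is −4√(1+4k)/(−1+√(1+4k))². Consequently the quotient of the maximum by the minimum equals −((−1+√(1+4k))/(1+√(1+4k)))². -/

import Mathlib

open Real

set_option maxHeartbeats 1600000 in
/-- Extremes of the Gauss curvature `G(z,θ) = −cos θ (2z + cos θ)/z²` of a Delaunay
surface on the level set `z(cos θ + z) = k`, and the value of their quotient. -/
theorem delaunay_gauss_extremes (k : ℝ) (hk : -(1 / 4) < k) (hk0 : k ≠ 0) :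
    IsGreatest {g : ℝ | ∃ z θ : ℝ, 0 < z ∧ z * (Real.cos θ + z) = k ∧
        g = -(Real.cos θ * (2 * z + Real.cos θ)) / z ^ 2}
      (4 * Real.sqrt (1 + 4 * k) / (1 + Real.sqrt (1 + 4 * k)) ^ 2) ∧
    IsLeast {g : ℝ | ∃ z θ : ℝ, 0 < z ∧ z * (Real.cos θ + z) = k ∧
        g = -(Real.cos θ * (2 * z + Real.cos θ)) / z ^ 2}
      (-(4 * Real.sqrt (1 + 4 * k)) / (-1 + Real.sqrt (1 + 4 * k)) ^ 2) ∧
    (4 * Real.sqrt (1 + 4 * k) / (1 + Real.sqrt (1 + 4 * k)) ^ 2) /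
        (-(4 * Real.sqrt (1 + 4 * k)) / (-1 + Real.sqrt (1 + 4 * k)) ^ 2)
      = -(((-1 + Real.sqrt (1 + 4 * k)) / (1 + Real.sqrt (1 + 4 * k))) ^ 2) := by
  have h14 : (0:ℝ) < 1 + 4 * k := by linarith
  set s := Real.sqrt (1 + 4 * k) with hsdef
  have hs0 : 0 < s := Real.sqrt_pos.mpr h14
  have hs2 : s ^ 2 = 1 + 4 * k := Real.sq_sqrt h14.le
  have hs1 : s ≠ 1 := by
    intro h
    rw [h] at hs2
    apply hk0; nlinarith
  have hsne : s - 1 ≠ 0 := sub_ne_zero.mpr hs1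
  have hsm1 : (s - 1) ^ 2 > 0 := by positivity
  have hsm1' : (0:ℝ) < (-1 + s) ^ 2 := by nlinarith [hsm1]
  have hkeq : k = (s ^ 2 - 1) / 4 := by linarith
  -- generic bound lemma
  have key : ∀ g z θ : ℝ, 0 < z → z * (Real.cos θ + z) = k →
      g = -(Real.cos θ * (2 * z + Real.cos θ)) / z ^ 2 →
      g = (z ^ 4 - k ^ 2) / z ^ 4 ∧ 2 * z ≤ 1 + s ∧ s - 1 ≤ 2 * z ∧ 1 - s ≤ 2 * z := by
    intro g z θ hz hzc hg
    have hc1 : Real.cos θ ≤ 1 := Real.cos_le_one θ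
    have hc2 : -1 ≤ Real.cos θ := Real.neg_one_le_cos θ
    have hz4 : (0:ℝ) < z ^ 4 := by positivity
    constructor
    · rw [hg, div_eq_div_iff (by positivity) (by positivity), ← hzc]; ring
    refine ⟨?_, ?_, ?_⟩
    · -- from cos θ ≥ -1 : (2z-1)^2 ≤ s^2
      nlinarith [mul_le_mul_of_nonneg_left hc2 hz.le, sq_nonneg (2*z - 1 - s), sq_nonneg (2*z - 1 + s)]
    · nlinarith [mul_le_mul_of_nonneg_left hc1 hz.le, sq_nonneg (2*z + 1 - s)]
    · nlinarith [mul_le_mul_of_nonneg_left hc2 hz.le, sq_nonneg (2*z - 1 + s)]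
  refine ⟨⟨⟨(1+s)/2, Real.pi, by positivity, ?_, ?_⟩, ?_⟩, ⟨?_, ?_⟩, ?_⟩
  · rw [Real.cos_pi]; nlinarith
  · rw [Real.cos_pi]
    rw [div_eq_div_iff (by positivity) (by positivity)]
    ring
  · -- upper bound
    rintro g ⟨z, θ, hz, hzc, hg⟩
    obtain ⟨hgf, hub, _, _⟩ := key g z θ hz hzc hg
    rw [hgf, div_le_div_iff₀ (by positivity) (by positivity)]
    have hz4 : z ^ 4 ≤ ((1+s)/2) ^ 4 := pow_le_pow_left₀ hz.le (by linarith) 4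
    have hk2 : k ^ 2 * (1+s) ^ 2 = ((1+s)/2) ^ 4 * (s-1) ^ 2 := by rw [hkeq]; ring
    nlinarith [mul_le_mul_of_nonneg_right hz4 (sq_nonneg (s-1)), hk2]
  · -- min membership
    rcases lt_or_gt_of_ne hk0 with hkneg | hkpos
    · have hslt : s < 1 := by nlinarith
      refine ⟨(1-s)/2, Real.pi, by linarith, ?_, ?_⟩
      · rw [Real.cos_pi]; nlinarith
      · rw [Real.cos_pi]
        rw [div_eq_div_iff (ne_of_gt hsm1') (ne_of_gt (pow_pos (by linarith) 2))]
        ring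
    · have hsgt : 1 < s := by nlinarith
      refine ⟨(s-1)/2, 0, by linarith, ?_, ?_⟩
      · rw [Real.cos_zero]; nlinarith
      · rw [Real.cos_zero]
        rw [div_eq_div_iff (ne_of_gt hsm1') (ne_of_gt (pow_pos (by linarith) 2))]
        ring
  · -- lower bound
    rintro g ⟨z, θ, hz, hzc, hg⟩
    obtain ⟨hgf, _, hlb1, hlb2⟩ := key g z θ hz hzc hg
    rw [hgf, div_le_div_iff₀ hsm1' (by positivity)]
    have hzsq : (s-1)^2 ≤ (2*z)^2 := by nlinarith
    have hz4 : ((s-1)/2) ^ 4 ≤ z ^ 4 := by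
      nlinarith [mul_self_le_mul_self (sq_nonneg (s-1)) hzsq]
    have hk2 : k ^ 2 * (-1+s) ^ 2 = ((s-1)/2) ^ 4 * (s+1) ^ 2 := by rw [hkeq]; ring
    nlinarith [mul_le_mul_of_nonneg_right hz4 (sq_nonneg (s+1)), hk2]
  · -- quotient
    have h1 : (1 + s) ≠ 0 := by positivity
    have h2 : (-1 + s) ≠ 0 := by intro h; apply hs1; linarith
    field_simp
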